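/- arXiv:1104.2029 — 6 statements merged into one kernel-verified Lean document; each statement's English description precedes it below -/
import Mathlib

section
/- Let R be a quadratic semigroup algebra over a field K with n generators given by d relations, where d ≤ (n²+n)/4. Then R is infinite dimensional as a K-vector space. -/
noncomputable section

/-- The monomial in the free algebra `K⟨X⟩ = MonoidAlgebra K (FreeMonoid X)`
corresponding to a word `w`. -/
def mOfW (K : Type*) [Field K] {X : Type*} (w : FreeMonoid X) :
    MonoidAlgebra K (FreeMonoid X) :=
  MonoidAlgebra.single w 1

/-- The degree-`m` monomial `u_1 u_2 ⋯ u_m`. -/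
def mOf (K : Type*) [Field K] {X : Type*} {m : ℕ} (u : Fin m → X) :
    MonoidAlgebra K (FreeMonoid X) :=
  mOfW K (FreeMonoid.ofList (List.ofFn u))

/-- The degree-2 monomial `ab`. -/
def m2 (K : Type*) [Field K] {X : Type*} (a b : X) :
    MonoidAlgebra K (FreeMonoid X) :=
  mOfW K (FreeMonoid.of a * FreeMonoid.of b)

/-- The support of an element of `K⟨X⟩`: the set of words occurring with
nonzero coefficient. -/
def suppOf {K X : Type*} [Field K] (f : MonoidAlgebra K (FreeMonoid X)) :
    Finset (FreeMonoid X) :=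
  Finsupp.support f.coeff

/-- The two-sided ideal generated by a set `s` in a `K`-algebra, viewed as the
`K`-submodule spanned by all products `p * a * q` with `a ∈ s`. -/
def idealSpan (K : Type*) [Field K] {A : Type*} [Ring A] [Algebra K A]
    (s : Set A) : Submodule K A :=
  Submodule.span K {x | ∃ p q : A, ∃ a ∈ s, x = p * a * q}

/-- `M` is a Quasierhöhungssystem (QHS) on the totally ordered set `X`. -/
def IsQHS (K : Type*) [Field K] {X : Type*} [LinearOrder X]
    (M : Set (MonoidAlgebra K (FreeMonoid X))) : Prop :=
  M.PairwiseDisjoint (fun g => (suppOf g : Set (FreeMonoid X))) ∧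
  (⋃ g ∈ M, (suppOf g : Set (FreeMonoid X))) =
    {w | ∃ a b : X, b ≤ a ∧ w = FreeMonoid.of a * FreeMonoid.of b} ∧
  ∀ g ∈ M,
    (∃ a b : X, b ≤ a ∧ g = m2 K a b) ∨
    (∃ a b c d : X, d ≤ c ∧ c < b ∧ b ≤ a ∧ g = m2 K a b - m2 K c d) ∨
    (∃ a b d : X, d < b ∧ b < a ∧ g = m2 K a b - m2 K b d)

/-- The maximal element `b = max X`. -/
def topEl (X : Type*) [Fintype X] [LinearOrder X] [Nonempty X] : X :=
  Finset.univ.max' Finset.univ_nonempty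

/-- The minimal element `a = min X`. -/
def botEl (X : Type*) [Fintype X] [LinearOrder X] [Nonempty X] : X :=
  Finset.univ.min' Finset.univ_nonempty

/-- The ideal `I_M`, generated by `M' = M \ {ba}` where `a = min X`, `b = max X`. -/
def qhsIdeal (K : Type*) [Field K] {X : Type*} [Fintype X] [LinearOrder X] [Nonempty X]
    (M : Set (MonoidAlgebra K (FreeMonoid X))) :
    Submodule K (MonoidAlgebra K (FreeMonoid X)) :=
  idealSpan K (M \ {m2 K (topEl X) (botEl X)})

/-- The right-to-left lexicographical strict order on degree-`m` monomials. -/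
def rlLt {X : Type*} [LinearOrder X] {m : ℕ} (u v : Fin m → X) : Prop :=
  ∃ j : Fin m, u j < v j ∧ ∀ l : Fin m, j < l → u l = v l

/-- The monomial `u` is minimal with respect to the QHS `M`. -/
def MinimalMon (K : Type*) [Field K] {X : Type*} [Fintype X] [LinearOrder X] [Nonempty X]
    (M : Set (MonoidAlgebra K (FreeMonoid X))) {m : ℕ} (u : Fin m → X) : Prop :=
  mOf K u ∉ qhsIdeal K M ∧
    ∀ v : Fin m → X, mOf K u - mOf K v ∈ qhsIdeal K M → u = v ∨ rlLt u v

/-- The monomial `u` is tame with respect to the QHS `M`. -/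
def TameMon (K : Type*) [Field K] {X : Type*} [Fintype X] [LinearOrder X] [Nonempty X]
    (M : Set (MonoidAlgebra K (FreeMonoid X))) {m : ℕ} (u : Fin m → X) : Prop :=
  MinimalMon K M u ∧ ∃ v : Fin m → X, ∃ j : Fin m,
    mOf K u - mOf K v ∈ qhsIdeal K M ∧ v j = topEl X ∧ ∀ l : Fin m, j < l → v l = u l

/-- The monomial `u` is singular with respect to the QHS `M`: minimal and not tame. -/
def SingularMon (K : Type*) [Field K] {X : Type*} [Fintype X] [LinearOrder X] [Nonempty X]
    (M : Set (MonoidAlgebra K (FreeMonoid X))) {m : ℕ} (u : Fin m → X) : Prop :=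
  MinimalMon K M u ∧ ¬ TameMon K M u

/-- The QHS `M` is regular: for some positive `m` there are no singular monomials
of degree `m`. -/
def RegularQHS (K : Type*) [Field K] {X : Type*} [Fintype X] [LinearOrder X] [Nonempty X]
    (M : Set (MonoidAlgebra K (FreeMonoid X))) : Prop :=
  ∃ m : ℕ, 0 < m ∧ ∀ u : Fin m → X, ¬ SingularMon K M u

/-- `e ∈ X` is pure with respect to `M`: whenever `ab - ce ∈ M`,
one has `a ≥ b > c ≥ e`. -/
def PureEl (K : Type*) [Field K] {X : Type*} [LinearOrder X]
    (M : Set (MonoidAlgebra K (FreeMonoid X))) (e : X) : Prop :=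
  ∀ a b c : X, m2 K a b - m2 K c e ∈ M → e ≤ c ∧ c < b ∧ b ≤ a

/-! ### Auxiliary machinery for the proof -/

section InfDimAux

theorem suppOf_def {K X : Type*} [Field K] (f : MonoidAlgebra K (FreeMonoid X)) :
    suppOf f = f.coeff.support := rfl

open Classical in
/-- The linear functional summing the coefficients of all words satisfying `P`. -/
def phiF (K : Type*) [Field K] {X : Type*} (P : FreeMonoid X → Prop) :
    MonoidAlgebra K (FreeMonoid X) →ₗ[K] K :=
  (Finsupp.lsum K fun w => if P w then (LinearMap.id : K →ₗ[K] K) else 0) ∘ₗ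
    (MonoidAlgebra.coeffLinearEquiv K).toLinearMap

open Classical in
theorem phiF_single {K : Type*} [Field K] {X : Type*} (P : FreeMonoid X → Prop)
    (w : FreeMonoid X) (c : K) :
    phiF K P (MonoidAlgebra.single w c) = if P w then c else 0 := by
  have h0 : phiF K P (MonoidAlgebra.single w c)
      = ((Finsupp.single w c).sum fun w' c' =>
          (if P w' then (LinearMap.id : K →ₗ[K] K) else 0) c') := rfl
  rw [h0, Finsupp.sum_single_index (by simp)]
  by_cases h : P w <;> simp [h]

theorem idealSpan_le_ker {K X : Type*} [Field K]
    (s : Set (MonoidAlgebra K (FreeMonoid X)))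
    (ψ : MonoidAlgebra K (FreeMonoid X) →ₗ[K] K)
    (h : ∀ r ∈ s, ∀ u v : FreeMonoid X,
      ψ (MonoidAlgebra.single u 1 * r * MonoidAlgebra.single v 1) = 0) :
    idealSpan K s ≤ LinearMap.ker ψ := by
  rw [idealSpan, Submodule.span_le]
  rintro x ⟨p, q, r, hr, rfl⟩
  simp only [SetLike.mem_coe, LinearMap.mem_ker]
  induction p using MonoidAlgebra.induction_linear with
  | zero => simp
  | add f g hf hg => rw [add_mul, add_mul, map_add, hf, hg, add_zero]
  | single u c =>
    induction q using MonoidAlgebra.induction_linear with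
    | zero => simp
    | add f g hf hg => rw [mul_add, map_add, hf, hg, add_zero]
    | single v e =>
      calc ψ (MonoidAlgebra.single u c * r * MonoidAlgebra.single v e)
          = ψ ((c • MonoidAlgebra.single u 1) * r * (e • MonoidAlgebra.single v 1)) := by
            rw [MonoidAlgebra.smul_single', MonoidAlgebra.smul_single', mul_one, mul_one]
        _ = 0 := by
            simp only [smul_mul_assoc, mul_smul_comm, map_smul]
            rw [h r hr u v, smul_zero, smul_zero]

theorem not_finite_of_sep {K X : Type*} [Field K]
    (s : Set (MonoidAlgebra K (FreeMonoid X)))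
    (P : ℕ → FreeMonoid X → Prop) (w : ℕ → FreeMonoid X)
    (hPw : ∀ m k, P m (w k) ↔ m = k)
    (hvan : ∀ m, ∀ r ∈ s, ∀ u v : FreeMonoid X,
      phiF K (P m) (MonoidAlgebra.single u 1 * r * MonoidAlgebra.single v 1) = 0) :
    ¬ Module.Finite K (MonoidAlgebra K (FreeMonoid X) ⧸ idealSpan K s) := by
  classical
  intro hfin
  have hli : LinearIndependent K
      (fun m : ℕ => (idealSpan K s).mkQ (MonoidAlgebra.single (w m) (1 : K))) := by
    rw [linearIndependent_iff']
    intro t g hsum i hit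
    have hmem : (∑ k ∈ t, g k • MonoidAlgebra.single (w k) (1 : K)) ∈ idealSpan K s := by
      rw [← Submodule.ker_mkQ (idealSpan K s), LinearMap.mem_ker, map_sum]
      simpa only [map_smul] using hsum
    have h0 := idealSpan_le_ker s (phiF K (P i)) (hvan i) hmem
    rw [LinearMap.mem_ker, map_sum] at h0
    have hterm : ∀ k ∈ t, phiF K (P i) (g k • MonoidAlgebra.single (w k) (1 : K))
        = if i = k then g k else 0 := by
      intro k _
      rw [map_smul, phiF_single]
      by_cases h : i = k
      · rw [if_pos ((hPw i k).mpr h), if_pos h, smul_eq_mul, mul_one]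
      · rw [if_neg (fun hp => h ((hPw i k).mp hp)), if_neg h, smul_zero]
    rw [Finset.sum_congr rfl hterm, Finset.sum_ite_eq, if_pos hit] at h0
    exact h0
  exact absurd hli.aleph0_le_rank (not_le.mpr (Module.rank_lt_aleph0 K _))

end InfDimAux

/-- **Theorem 1.** A quadratic semigroup algebra with `n` generators given by
`d ≤ (n²+n)/4` relations is infinite dimensional over `K`. -/
theorem quadratic_semigroup_algebra_infinite_dimensional
    (K : Type*) [Field K] (n d : ℕ) (hn : 0 < n) (hd : 4 * d ≤ n ^ 2 + n)
    (rel : Fin d → MonoidAlgebra K (FreeMonoid (Fin n)))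
    (hrel : ∀ i, (∃ a b : Fin n, rel i = m2 K a b) ∨
      ∃ a b c e : Fin n, rel i = m2 K a b - m2 K c e) :
    ¬ Module.Finite K
      (MonoidAlgebra K (FreeMonoid (Fin n)) ⧸ idealSpan K (Set.range rel)) := by
  classical
  by_cases hmono : ∃ i, ∃ a b : Fin n, rel i = m2 K a b
  · -- Case A : some relation is a monomial.
    obtain ⟨i₀, a₀, b₀, hi₀⟩ := hmono
    set Tw : Finset (FreeMonoid (Fin n)) :=
      Finset.univ.biUnion (fun i => suppOf (rel i)) with hTwdef
    -- support size bounds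
    have hsupp2 : ∀ i, (suppOf (rel i)).card ≤ 2 := by
      intro i
      rcases hrel i with ⟨a, b, h⟩ | ⟨a, b, c, e, h⟩
      · rw [h, suppOf_def, m2, mOfW, MonoidAlgebra.coeff_single, Finsupp.support_single_ne_zero _ one_ne_zero]
        simp
      · rw [h, suppOf_def, m2, m2, mOfW, mOfW, MonoidAlgebra.coeff_sub, MonoidAlgebra.coeff_single,
          MonoidAlgebra.coeff_single]
        refine le_trans (Finset.card_le_card
          (Finsupp.support_sub.trans (Finset.union_subset_union
            Finsupp.support_single_subset Finsupp.support_single_subset))) ?_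
        exact le_trans (Finset.card_union_le _ _) (by simp)
    have hcard1 : (suppOf (rel i₀)).card = 1 := by
      rw [hi₀, suppOf_def, m2, mOfW, MonoidAlgebra.coeff_single, Finsupp.support_single_ne_zero _ one_ne_zero,
        Finset.card_singleton]
    have hTwcard : Tw.card + 1 ≤ 2 * d := by
      have h1 : Tw.card ≤ ∑ i, (suppOf (rel i)).card := Finset.card_biUnion_le
      have e1 : ∑ i ∈ Finset.univ.erase i₀, (suppOf (rel i)).card + (suppOf (rel i₀)).card
          = ∑ i, (suppOf (rel i)).card := Finset.sum_erase_add _ _ (Finset.mem_univ i₀)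
      have e2 : ∑ i ∈ Finset.univ.erase i₀, (suppOf (rel i)).card
          ≤ (Finset.univ.erase i₀).card • 2 :=
        Finset.sum_le_card_nsmul _ _ 2 (fun x _ => hsupp2 x)
      have e3 : (Finset.univ.erase i₀).card = d - 1 := by
        rw [Finset.card_erase_of_mem (Finset.mem_univ _), Finset.card_univ, Fintype.card_fin]
      have hd1 : 0 < d := i₀.pos
      simp only [smul_eq_mul, e3] at e2
      omega
    -- pigeonhole : a pair (a,b) with both ab and ba untouched
    have key : ∃ a b : Fin n, (FreeMonoid.of a * FreeMonoid.of b) ∉ Tw ∧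
        (FreeMonoid.of b * FreeMonoid.of a) ∉ Tw := by
      by_contra hcon
      push_neg at hcon
      set Tp : Finset (Fin n × Fin n) :=
        Finset.univ.filter (fun p => (FreeMonoid.of p.1 * FreeMonoid.of p.2) ∈ Tw) with hTpdef
      have hTpcard : Tp.card ≤ Tw.card := by
        apply Finset.card_le_card_of_injOn (fun p => FreeMonoid.of p.1 * FreeMonoid.of p.2)
        · intro p hp
          rw [Finset.mem_coe, hTpdef, Finset.mem_filter] at hp
          exact hp.2
        · intro p _ q _ h
          have h' := congrArg FreeMonoid.toList h
          simp only [FreeMonoid.toList_mul, FreeMonoid.toList_of, List.singleton_append,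
            List.cons.injEq, List.cons_append, List.nil_append] at h'
          exact Prod.ext h'.1 h'.2.1
      set U : Finset (Fin n × Fin n) := Finset.univ \ Tp with hUdef
      have hswap : ∀ p ∈ U, p.1 ≠ p.2 ∧ Prod.swap p ∈ Tp := by
        intro p hp
        have hpT : (FreeMonoid.of p.1 * FreeMonoid.of p.2) ∉ Tw := by
          simp only [hUdef, Finset.mem_sdiff, hTpdef, Finset.mem_filter, Finset.mem_univ,
            true_and] at hp
          exact hp
        have hsw : (FreeMonoid.of p.2 * FreeMonoid.of p.1) ∈ Tw := hcon p.1 p.2 hpT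
        refine ⟨?_, ?_⟩
        · intro hEq
          apply hpT
          rw [hEq] at hsw ⊢
          exact hsw
        · simp only [hTpdef, Finset.mem_filter, Finset.mem_univ, true_and]
          exact hsw
      have hinj : Set.InjOn (fun p : Fin n × Fin n => Sym2.mk p.1 p.2) U := by
        intro p hp q hq h
        rcases Sym2.eq_iff.mp (h : s(p.1, p.2) = s(q.1, q.2)) with ⟨h1, h2⟩ | ⟨h1, h2⟩
        · exact Prod.ext h1 h2
        · exfalso
          have hq' : q ∈ Tp := by
            have hpq : Prod.swap p = q := by
              rw [Prod.ext_iff, Prod.fst_swap, Prod.snd_swap]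
              exact ⟨h2, h1⟩
            rw [← hpq]
            exact (hswap p hp).2
          have : q ∉ Tp := (Finset.mem_sdiff.mp hq).2
          exact this hq'
      have hUle : U.card ≤ (Finset.univ.filter (fun z : Sym2 (Fin n) => ¬ z.IsDiag)).card := by
        refine Finset.card_le_card_of_injOn (fun p => Sym2.mk p.1 p.2) ?_ hinj
        intro p hp
        simp only [Finset.mem_coe, Finset.mem_filter, Finset.mem_univ, true_and]
        rw [Sym2.isDiag_iff_proj_eq]
        exact (hswap p hp).1
      have hSym : (Finset.univ.filter (fun z : Sym2 (Fin n) => ¬ z.IsDiag)).card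
          = n.choose 2 := by
        rw [← Fintype.card_subtype, Sym2.card_subtype_not_diag, Fintype.card_fin]
      have hUcard : U.card = n * n - Tp.card := by
        rw [hUdef, Finset.card_sdiff_of_subset (Finset.subset_univ _), Finset.card_univ,
          Fintype.card_prod, Fintype.card_fin]
      have hch : 2 * Nat.choose n 2 + n = n * n := by
        obtain ⟨k, rfl⟩ : ∃ k, n = k + 1 := ⟨n - 1, by omega⟩
        rw [Nat.choose_two_right]
        have hev : Even ((k + 1) * (k + 1 - 1)) := by
          simp only [Nat.add_sub_cancel]
          rw [Nat.mul_comm]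
          exact Nat.even_mul_succ_self k
        rw [Nat.two_mul_div_two_of_even hev]
        simp only [Nat.add_sub_cancel]
        ring
      rw [hSym] at hUle
      rw [pow_two] at hd
      omega
    obtain ⟨a, b, ha, hb⟩ := key
    set f : ℕ → Fin n := fun i => if Even i then a else b with hfdef
    refine not_finite_of_sep (Set.range rel)
      (fun m u => (FreeMonoid.toList u).length = m ∧
        (FreeMonoid.toList u).Chain'
          (fun x y => (FreeMonoid.of x * FreeMonoid.of y) ∉ Tw))
      (fun m => FreeMonoid.ofList ((List.range m).map f)) ?_ ?_
    · intro m k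
      constructor
      · rintro ⟨hlen, -⟩
        simpa [FreeMonoid.toList_ofList] using hlen.symm
      · rintro rfl
        refine ⟨by simp [FreeMonoid.toList_ofList], ?_⟩
        rw [FreeMonoid.toList_ofList, List.Chain', List.isChain_map]
        rcases m with _ | m
        · simp
        · rw [List.isChain_range_succ]
          intro j hj
          simp only [Nat.succ_eq_add_one]
          by_cases hj2 : Even j
          · have e1 : f j = a := by simp only [hfdef]; exact if_pos hj2
            have e2 : f (j + 1) = b := by
              simp only [hfdef]
              exact if_neg (fun hc => (Nat.even_add_one.mp hc) hj2)
            rw [e1, e2]; exact ha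
          · have e1 : f j = b := by simp only [hfdef]; exact if_neg hj2
            have e2 : f (j + 1) = a := by
              simp only [hfdef]
              exact if_pos (Nat.even_add_one.mpr hj2)
            rw [e1, e2]; exact hb
    · rintro m r ⟨i, rfl⟩ u v
      have hker : ∀ a' b' : Fin n, (FreeMonoid.of a' * FreeMonoid.of b') ∈ Tw →
          ∀ c : K, phiF K (fun u => (FreeMonoid.toList u).length = m ∧
              (FreeMonoid.toList u).Chain'
                (fun x y => (FreeMonoid.of x * FreeMonoid.of y) ∉ Tw))
            (MonoidAlgebra.single
              (u * (FreeMonoid.of a' * FreeMonoid.of b') * v) c) = 0 := by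
        intro a' b' hab c
        rw [phiF_single, if_neg]
        rintro ⟨hlen, hch⟩
        have hinf : [a', b'] <:+:
            FreeMonoid.toList (u * (FreeMonoid.of a' * FreeMonoid.of b') * v) := by
          refine ⟨FreeMonoid.toList u, FreeMonoid.toList v, ?_⟩
          simp [FreeMonoid.toList_mul, FreeMonoid.toList_of]
        have hpair := hch.infix hinf
        rw [List.isChain_pair] at hpair
        exact hpair hab
      rcases hrel i with ⟨a', b', h⟩ | ⟨a', b', c', e', h⟩
      · have hmem : (FreeMonoid.of a' * FreeMonoid.of b') ∈ Tw := by
          refine Finset.mem_biUnion.mpr ⟨i, Finset.mem_univ i, ?_⟩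
          rw [h, suppOf_def, m2, mOfW, MonoidAlgebra.coeff_single, Finsupp.support_single_ne_zero _ one_ne_zero]
          exact Finset.mem_singleton_self _
        rw [h, m2, mOfW, MonoidAlgebra.single_mul_single, MonoidAlgebra.single_mul_single]
        exact hker a' b' hmem _
      · by_cases hw : (FreeMonoid.of a' * FreeMonoid.of b')
            = (FreeMonoid.of c' * FreeMonoid.of e')
        · rw [h, m2, m2, mOfW, mOfW, hw, sub_self, mul_zero, zero_mul, map_zero]
        · have hmem1 : (FreeMonoid.of a' * FreeMonoid.of b') ∈ Tw := by
            refine Finset.mem_biUnion.mpr ⟨i, Finset.mem_univ i, ?_⟩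
            rw [h, suppOf_def]
            refine Finsupp.mem_support_iff.mpr ?_
            rw [MonoidAlgebra.coeff_sub, Finsupp.sub_apply, m2, m2, mOfW, mOfW, MonoidAlgebra.coeff_single,
                MonoidAlgebra.coeff_single, Finsupp.single_eq_same,
              Finsupp.single_eq_of_ne hw, sub_zero]
            exact one_ne_zero
          have hmem2 : (FreeMonoid.of c' * FreeMonoid.of e') ∈ Tw := by
            refine Finset.mem_biUnion.mpr ⟨i, Finset.mem_univ i, ?_⟩
            rw [h, suppOf_def]
            refine Finsupp.mem_support_iff.mpr ?_
            rw [MonoidAlgebra.coeff_sub, Finsupp.sub_apply, m2, m2, mOfW, mOfW, MonoidAlgebra.coeff_single,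
                MonoidAlgebra.coeff_single, Finsupp.single_eq_same,
              Finsupp.single_eq_of_ne (fun hh => hw hh.symm), zero_sub]
            exact neg_ne_zero.mpr one_ne_zero
          rw [h, m2, m2, mOfW, mOfW, mul_sub, sub_mul, map_sub,
            MonoidAlgebra.single_mul_single, MonoidAlgebra.single_mul_single,
            MonoidAlgebra.single_mul_single, MonoidAlgebra.single_mul_single,
            hker a' b' hmem1 _, hker c' e' hmem2 _, sub_zero]
  · -- Case B : all relations are binomial.
    push_neg at hmono
    have hbin : ∀ i, ∃ a b c e : Fin n, rel i = m2 K a b - m2 K c e := by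
      intro i
      rcases hrel i with ⟨a, b, h⟩ | h
      · exact absurd h (hmono i a b)
      · exact h
    refine not_finite_of_sep (Set.range rel)
      (fun m u => (FreeMonoid.toList u).length = m)
      (fun m => FreeMonoid.ofList (List.replicate m ⟨0, hn⟩)) ?_ ?_
    · intro m k
      simp [FreeMonoid.toList_ofList, eq_comm]
    · rintro m r ⟨i, rfl⟩ u v
      obtain ⟨a, b, c, e, h⟩ := hbin i
      rw [h, m2, m2, mOfW, mOfW, mul_sub, sub_mul, map_sub,
        MonoidAlgebra.single_mul_single, MonoidAlgebra.single_mul_single,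
        MonoidAlgebra.single_mul_single, MonoidAlgebra.single_mul_single,
        phiF_single, phiF_single]
      simp only [FreeMonoid.toList_mul, FreeMonoid.toList_of, List.length_append,
        List.length_cons, List.length_nil, List.length_singleton]
      rw [sub_self]
end
end

section
/- Let X be a non-empty set, M a family of homogeneous degree-2 elements of K⟨X⟩, and R = K⟨X⟩/I where I is the two-sided ideal generated by M. If there exist a, b ∈ X such that neither ab nor ba belongs to supp(f) for any f ∈ M, then R is infinite dimensional as a K-vector space. -/
noncomputable section

def altW {X : Type*} (a b : X) : ℕ → List X
  | 0 => []
  | n + 1 => a :: b :: altW a b n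

theorem length_altW {X : Type*} (a b : X) (n : ℕ) : (altW a b n).length = 2 * n := by
  induction n with
  | zero => rfl
  | succ n ih => simp [altW, ih]; ring

theorem getElem_altW {X : Type*} (a b : X) (n : ℕ) (i : ℕ) (h : i < (altW a b n).length) :
    (altW a b n)[i] = if i % 2 = 0 then a else b := by
  induction n generalizing i with
  | zero => simp [altW] at h
  | succ n ih =>
    match i with
    | 0 => simp [altW]
    | 1 => simp [altW]
    | (i + 2) =>
      have h' : i < (altW a b n).length := by
        have := h; simp [altW] at this; omega
      have h2 : (altW a b (n+1))[i+2] = (altW a b n)[i] := rfl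
      rw [h2, ih i h', Nat.add_mod_right]

theorem factor_altW {X : Type*} (a b : X) (n : ℕ) (u s v : List X)
    (heq : u ++ s ++ v = altW a b n) (hs : s.length = 2) :
    s = [a, b] ∨ s = [b, a] := by
  obtain ⟨x, y, rfl⟩ := List.length_eq_two.1 hs
  have heq' : u ++ (x :: y :: v) = altW a b n := by rw [← heq]; simp
  have h0 : u.length + 1 < (altW a b n).length := by
    rw [← heq']; simp
  have h0' : u.length < (altW a b n).length := by omega
  have hx : (altW a b n)[u.length]'h0' = x := by
    rw [List.getElem_of_eq heq'.symm, List.getElem_append_right (le_refl u.length)]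
    simp
  have hy : (altW a b n)[u.length + 1]'h0 = y := by
    rw [List.getElem_of_eq heq'.symm,
      List.getElem_append_right (by omega : u.length ≤ u.length + 1)]
    simp
  rw [getElem_altW] at hx hy
  rcases Nat.even_or_odd u.length with he | ho
  · left
    have h1 : u.length % 2 = 0 := Nat.even_iff.1 he
    have h2 : (u.length + 1) % 2 ≠ 0 := by omega
    simp [h1, h2] at hx hy
    rw [← hx, ← hy]
  · right
    have h1 : u.length % 2 ≠ 0 := by have := Nat.odd_iff.1 ho; omega
    have h2 : (u.length + 1) % 2 = 0 := by have := Nat.odd_iff.1 ho; omega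
    simp [h1, h2] at hx hy
    rw [← hx, ← hy]

theorem coeff_altW_eq_zero {K X : Type*} [Field K]
    (M : Set (MonoidAlgebra K (FreeMonoid X)))
    (hdeg : ∀ f ∈ M, ∀ w ∈ suppOf f, (FreeMonoid.toList w).length = 2)
    (a b : X)
    (hab : ∀ f ∈ M, FreeMonoid.of a * FreeMonoid.of b ∉ suppOf f ∧
      FreeMonoid.of b * FreeMonoid.of a ∉ suppOf f) :
    ∀ x ∈ idealSpan K M, ∀ n : ℕ, x.coeff (FreeMonoid.ofList (altW a b n)) = 0 := by
  classical
  have key : idealSpan K M ≤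
      ⨅ n : ℕ, LinearMap.ker ((Finsupp.lapply (M := K) (FreeMonoid.ofList (altW a b n))).comp
          (MonoidAlgebra.coeffLinearEquiv K).toLinearMap) := by
    apply Submodule.span_le.2
    rintro x ⟨p, q, f, hf, rfl⟩
    simp only [SetLike.mem_coe, Submodule.mem_iInf]
    intro n
    rw [LinearMap.mem_ker]
    show (p * f * q).coeff (FreeMonoid.ofList (altW a b n)) = 0
    rw [← Finsupp.notMem_support_iff]
    intro hmem
    have h1 := MonoidAlgebra.support_coeff_mul_subset (p * f) q hmem
    rw [Finset.mem_mul] at h1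
    obtain ⟨y, hy, v, hv, hyv⟩ := h1
    have h2 := MonoidAlgebra.support_coeff_mul_subset p f hy
    rw [Finset.mem_mul] at h2
    obtain ⟨u, hu, s, hsf, hus⟩ := h2
    have heq : FreeMonoid.toList u ++ FreeMonoid.toList s ++ FreeMonoid.toList v
        = altW a b n := by
      have : FreeMonoid.toList (u * s * v) = FreeMonoid.toList (FreeMonoid.ofList (altW a b n)) := by
        rw [hus, hyv]
      simpa [FreeMonoid.toList_mul] using this
    have hslen : (FreeMonoid.toList s).length = 2 := hdeg f hf s hsf
    rcases factor_altW a b n _ _ _ heq hslen with hcase | hcase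
    · have : s = FreeMonoid.of a * FreeMonoid.of b := FreeMonoid.toList.injective hcase
      exact (hab f hf).1 (this ▸ hsf)
    · have : s = FreeMonoid.of b * FreeMonoid.of a := FreeMonoid.toList.injective hcase
      exact (hab f hf).2 (this ▸ hsf)
  intro x hx n
  have := key hx
  rw [Submodule.mem_iInf] at this
  exact this n

/-- **Lemma (SE).** If some `a, b ∈ X` are such that neither `ab` nor `ba` belongs to
the support of any relation, then the quotient algebra is infinite dimensional. -/
theorem infinite_dimensional_of_missing_pair
    (K : Type*) [Field K] (X : Type*) [Nonempty X]
    (M : Set (MonoidAlgebra K (FreeMonoid X)))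
    (hdeg : ∀ f ∈ M, ∀ w ∈ suppOf f, (FreeMonoid.toList w).length = 2)
    (h : ∃ a b : X, ∀ f ∈ M,
      FreeMonoid.of a * FreeMonoid.of b ∉ suppOf f ∧
      FreeMonoid.of b * FreeMonoid.of a ∉ suppOf f) :
    ¬ Module.Finite K (MonoidAlgebra K (FreeMonoid X) ⧸ idealSpan K M) := by
  obtain ⟨a, b, hab⟩ := h
  intro hfin
  set w : ℕ → FreeMonoid X := fun n => FreeMonoid.ofList (altW a b n) with hw
  have hwinj : Function.Injective w := by
    intro m n hmn
    have : (altW a b m).length = (altW a b n).length := by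
      rw [show altW a b m = altW a b n from congrArg FreeMonoid.toList hmn]
    rw [length_altW, length_altW] at this
    omega
  have hli : LinearIndependent K
      (fun n : ℕ => (MonoidAlgebra.single (w n) 1 : MonoidAlgebra K (FreeMonoid X))) := by
    have := (MonoidAlgebra.basis (FreeMonoid X) K).linearIndependent.comp w hwinj
    simpa [Function.comp_def, MonoidAlgebra.basis_apply] using this
  have hdisj : Disjoint (Submodule.span K (Set.range
      (fun n : ℕ => (MonoidAlgebra.single (w n) 1 : MonoidAlgebra K (FreeMonoid X)))))
      (idealSpan K M) := by
    rw [Submodule.disjoint_def]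
    intro x hxspan hxI
    rw [Finsupp.mem_span_range_iff_exists_finsupp] at hxspan
    obtain ⟨c, hc⟩ := hxspan
    have hx : x = MonoidAlgebra.ofCoeff (Finsupp.mapDomain w c) := by
      rw [← hc, Finsupp.mapDomain, MonoidAlgebra.ofCoeff_finsuppSum]
      congr 1
      ext n t
      rw [MonoidAlgebra.smul_single', mul_one, MonoidAlgebra.ofCoeff_single]
    have hc0 : c = 0 := by
      ext m
      have := coeff_altW_eq_zero M hdeg a b hab x hxI m
      rw [hx, MonoidAlgebra.coeff_ofCoeff] at this
      rw [Finsupp.mapDomain_apply hwinj] at this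
      simpa using this
    rw [hx, hc0, Finsupp.mapDomain_zero, MonoidAlgebra.ofCoeff_zero]
  have hli2 := hli.map (f := (idealSpan K M).mkQ)
    (by rwa [Submodule.ker_mkQ])
  exact (instInfiniteNat).not_finite hli2.finite
end
end

section
/- Let X be a non-empty set, M a family of homogeneous degree-2 elements of K⟨X⟩, and R = K⟨X⟩/I where I is the two-sided ideal generated by M. If for every f ∈ M the coefficients of f sum to 0, then R is infinite dimensional as a K-vector space. -/
noncomputable section

/-- **Lemma (SE1).** If the coefficients of each relation sum up to `0`, then the
quotient algebra is infinite dimensional. -/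
theorem infinite_dimensional_of_coeff_sum_zero
    (K : Type*) [Field K] (X : Type*) [Nonempty X]
    (M : Set (MonoidAlgebra K (FreeMonoid X)))
    (hdeg : ∀ f ∈ M, ∀ w ∈ suppOf f, (FreeMonoid.toList w).length = 2)
    (hsum : ∀ f ∈ M, ∑ w ∈ suppOf f, (f.coeff : FreeMonoid X →₀ K) w = 0) :
    ¬ Module.Finite K (MonoidAlgebra K (FreeMonoid X) ⧸ idealSpan K M) := by
  intro hfin
  -- the algebra map sending each generator to `X : K[X]`
  set φ : MonoidAlgebra K (FreeMonoid X) →ₐ[K] Polynomial K :=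
    MonoidAlgebra.lift K (Polynomial K) (FreeMonoid X)
      (FreeMonoid.lift (fun _ => Polynomial.X)) with hφ
  have hword : ∀ w : FreeMonoid X,
      (FreeMonoid.lift (fun _ : X => (Polynomial.X : Polynomial K))) w
        = Polynomial.X ^ (FreeMonoid.toList w).length := by
    intro w
    rw [FreeMonoid.lift_apply]
    simp [List.map_const', List.prod_replicate]
  have hM : ∀ f ∈ M, φ f = 0 := by
    intro f hf
    have : φ f = f.coeff.sum fun w c =>
        c • (FreeMonoid.lift (fun _ : X => (Polynomial.X : Polynomial K))) w := by
      simp [hφ, MonoidAlgebra.lift_apply]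
    rw [this, Finsupp.sum]
    have : ∀ w ∈ f.coeff.support,
        f.coeff w • (FreeMonoid.lift (fun _ : X => (Polynomial.X : Polynomial K))) w
          = f.coeff w • (Polynomial.X : Polynomial K) ^ 2 := by
      intro w hw
      rw [hword w, hdeg f hf w hw]
    rw [Finset.sum_congr rfl this, ← Finset.sum_smul]
    have := hsum f hf
    rw [suppOf] at this
    rw [this, zero_smul]
  have hle : idealSpan K M ≤ LinearMap.ker φ.toLinearMap := by
    rw [idealSpan, Submodule.span_le]
    rintro x ⟨p, q, a, ha, rfl⟩
    simp [LinearMap.mem_ker, map_mul, hM a ha]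
  have hφsurj : Function.Surjective φ := by
    rw [← AlgHom.range_eq_top, eq_top_iff, ← Polynomial.adjoin_X, Algebra.adjoin_le_iff]
    rintro x rfl
    refine ⟨MonoidAlgebra.single (FreeMonoid.of (Classical.arbitrary X)) 1, ?_⟩
    simp [hφ, MonoidAlgebra.lift_single]
  set ψ := (idealSpan K M).liftQ φ.toLinearMap hle with hψ
  have hψsurj : Function.Surjective ψ := by
    intro x
    obtain ⟨y, rfl⟩ := hφsurj x
    exact ⟨Submodule.Quotient.mk y, rfl⟩
  have : Module.Finite K (Polynomial K) := Module.Finite.of_surjective ψ hψsurj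
  exact Polynomial.not_finite this
end
end

section
/- Let X be a finite totally ordered set, M a QHS on X, u = u_1…u_m a degree-m monomial and v a submonomial of u (i.e. v = u_j u_{j+1}…u_k for some 1 ≤ j ≤ k ≤ m). If u is minimal with respect to M then v is minimal, and if u is singular with respect to M then v is singular. -/
noncomputable section

lemma qhs_ofFn_decomp {X : Type*} (m j l r : ℕ) (h : m = j + l + r) (f : Fin m → X) :
    List.ofFn f = List.ofFn (fun i : Fin j => f ⟨i, by omega⟩)
      ++ List.ofFn (fun i : Fin l => f ⟨j + i, by omega⟩)
      ++ List.ofFn (fun i : Fin r => f ⟨j + l + i, by omega⟩) := by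
  apply List.ext_getElem
  · simp; omega
  · intro n h1 h2
    simp only [List.getElem_append, List.getElem_ofFn, List.length_ofFn, List.length_append]
    split
    · split
      · congr 1
      · congr 1; apply Fin.ext; simp; omega
    · congr 1; apply Fin.ext; simp; omega

lemma qhs_mOfW_mul (K : Type*) [Field K] {X : Type*} (p q : FreeMonoid X) :
    mOfW K (p * q) = mOfW K p * mOfW K q := by
  simp [mOfW, MonoidAlgebra.single_mul_single]

lemma qhs_idealSpan_mul_mem (K : Type*) [Field K] {A : Type*} [Ring A] [Algebra K A]
    (s : Set A) {x : A} (hx : x ∈ idealSpan K s) (r t : A) :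
    r * x * t ∈ idealSpan K s := by
  induction hx using Submodule.span_induction with
  | mem y hy =>
    obtain ⟨p, q, a, ha, rfl⟩ := hy
    exact Submodule.subset_span ⟨r * p, q * t, a, ha, by noncomm_ring⟩
  | zero => simp only [mul_zero, zero_mul]; exact Submodule.zero_mem _
  | add y z _ _ hy hz => simpa [mul_add, add_mul] using Submodule.add_mem _ hy hz
  | smul c y _ hy => simpa [mul_smul_comm, smul_mul_assoc] using Submodule.smul_mem _ c hy

/-- **Lemma (subm).** A submonomial of a minimal monomial is minimal and a
submonomial of a singular monomial is singular. -/
theorem submonomial_minimal_and_singular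
    (K : Type*) [Field K] (X : Type*) [Fintype X] [LinearOrder X] [Nonempty X]
    (M : Set (MonoidAlgebra K (FreeMonoid X))) (hM : IsQHS K M)
    (m l j : ℕ) (hl : 0 < l) (hjl : j + l ≤ m) (u : Fin m → X) (v : Fin l → X)
    (hv : ∀ i : Fin l, v i = u ⟨j + i.val, lt_of_lt_of_le (Nat.add_lt_add_left i.isLt j) hjl⟩) :
    (MinimalMon K M u → MinimalMon K M v) ∧
    (SingularMon K M u → SingularMon K M v) := by
  have hr : m = j + l + (m - (j + l)) := by omega
  set r := m - (j + l) with hrdef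
  -- prefix and suffix monomials
  set A : MonoidAlgebra K (FreeMonoid X) :=
    mOfW K (FreeMonoid.ofList (List.ofFn (fun i : Fin j => u ⟨i, by omega⟩))) with hA
  set B : MonoidAlgebra K (FreeMonoid X) :=
    mOfW K (FreeMonoid.ofList (List.ofFn (fun i : Fin r => u ⟨j + l + i, by omega⟩))) with hB
  -- the replacement of the segment of u by w
  set repl : (Fin l → X) → (Fin m → X) := fun w i =>
    if h : j ≤ i.val ∧ i.val < j + l then w ⟨i.val - j, by omega⟩ else u i with hrepl
  have hreplmOf : ∀ w : Fin l → X, mOf K (repl w) = A * mOf K w * B := by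
    intro w
    have hdec := qhs_ofFn_decomp m j l r hr (repl w)
    have hpre : (List.ofFn (fun i : Fin j => repl w ⟨i, by omega⟩))
        = List.ofFn (fun i : Fin j => u ⟨i, by omega⟩) := by
      congr 1
      funext i
      have hi := i.isLt
      simp only [hrepl]
      rw [dif_neg (by omega)]
    have hmid : (List.ofFn (fun i : Fin l => repl w ⟨j + i, by omega⟩)) = List.ofFn w := by
      congr 1
      funext i
      have hi := i.isLt
      simp only [hrepl]
      rw [dif_pos (by constructor <;> omega)]
      congr 1
      apply Fin.ext
      simp
    have hpost : (List.ofFn (fun i : Fin r => repl w ⟨j + l + i, by omega⟩))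
        = List.ofFn (fun i : Fin r => u ⟨j + l + i, by omega⟩) := by
      congr 1
      funext i
      have hi := i.isLt
      simp only [hrepl]
      rw [dif_neg (by omega)]
    rw [hpre, hmid, hpost] at hdec
    have : FreeMonoid.ofList (List.ofFn (repl w)) =
        FreeMonoid.ofList (List.ofFn (fun i : Fin j => u ⟨i, by omega⟩)) *
        FreeMonoid.ofList (List.ofFn w) *
        FreeMonoid.ofList (List.ofFn (fun i : Fin r => u ⟨j + l + i, by omega⟩)) := by
      rw [hdec]; rfl
    rw [mOf, this, qhs_mOfW_mul, qhs_mOfW_mul, hA, hB, mOf]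
  have hreplv : repl v = u := by
    funext i
    simp only [hrepl]
    split
    · rw [hv]
      congr 1
      apply Fin.ext
      simp
      omega
    · rfl
  have humOf : mOf K u = A * mOf K v * B := by rw [← hreplv, hreplmOf]
  -- membership transfer
  have hmem : ∀ w : Fin l → X, mOf K v - mOf K w ∈ qhsIdeal K M →
      mOf K u - mOf K (repl w) ∈ qhsIdeal K M := by
    intro w hw
    have : mOf K u - mOf K (repl w) = A * (mOf K v - mOf K w) * B := by
      rw [humOf, hreplmOf, mul_sub, sub_mul]
    rw [this]
    exact qhs_idealSpan_mul_mem K _ hw A B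
  -- v minimal given u minimal
  have hmin : MinimalMon K M u → MinimalMon K M v := by
    intro hu
    constructor
    · intro hvI
      apply hu.1
      rw [humOf]
      exact qhs_idealSpan_mul_mem K _ hvI A B
    · intro w hw
      rcases hu.2 (repl w) (hmem w hw) with heq | hlt
      · left
        funext i
        have h1 : u ⟨j + i.val, by omega⟩ = repl w ⟨j + i.val, by omega⟩ := by rw [← heq]
        rw [hv i, h1]
        simp only [hrepl]
        rw [dif_pos (by constructor <;> omega)]
        congr 1
        apply Fin.ext
        simp
      · right
        obtain ⟨j', hj'lt, hj'gt⟩ := hlt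
        have hrange : j ≤ j'.val ∧ j'.val < j + l := by
          by_contra hcon
          have : repl w j' = u j' := by simp only [hrepl]; rw [dif_neg hcon]
          rw [this] at hj'lt
          exact lt_irrefl _ hj'lt
        refine ⟨⟨j'.val - j, by omega⟩, ?_, ?_⟩
        · have h1 : v ⟨j'.val - j, by omega⟩ = u j' := by
            rw [hv]
            congr 1
            apply Fin.ext
            simp
            omega
          have h2 : repl w j' = w ⟨j'.val - j, by omega⟩ := by
            simp only [hrepl]
            rw [dif_pos hrange]
          rw [h1, ← h2]
          exact hj'lt
        · intro i hi
          have h1 : j' < (⟨j + i.val, by omega⟩ : Fin m) := by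
            simp only [Fin.lt_def] at hi ⊢
            omega
          have h2 := hj'gt _ h1
          rw [hv i, h2]
          simp only [hrepl]
          rw [dif_pos (by constructor <;> omega)]
          congr 1
          apply Fin.ext
          simp
  refine ⟨hmin, ?_⟩
  -- singular
  rintro ⟨huMin, huNotTame⟩
  refine ⟨hmin huMin, ?_⟩
  rintro ⟨hvMin, w, i, hwI, hwtop, hwagree⟩
  apply huNotTame
  refine ⟨huMin, repl w, ⟨j + i.val, by omega⟩, hmem w hwI, ?_, ?_⟩
  · simp only [hrepl]
    rw [dif_pos (by constructor <;> omega)]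
    rw [← hwtop]
    congr 1
    apply Fin.ext
    simp
  · intro l' hl'
    simp only [Fin.lt_def] at hl'
    simp only [hrepl]
    split
    · rename_i hin
      have hgt : i < (⟨l'.val - j, by omega⟩ : Fin l) := by
        simp only [Fin.lt_def]
        omega
      rw [hwagree _ hgt, hv]
      congr 1
      apply Fin.ext
      simp
      omega
    · rfl
end
end

section
/- Let X be a finite totally ordered set and M a regular QHS on X. Then the quadratic semigroup algebra R_M = K⟨X⟩/J_M, where J_M is the two-sided ideal of K⟨X⟩ generated by M, is finite dimensional as a K-vector space. -/
noncomputable section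

namespace QHSAux

variable (K : Type*) [Field K] {X : Type*}

lemma mOfW_mul (w₁ w₂ : FreeMonoid X) : mOfW K (w₁ * w₂) = mOfW K w₁ * mOfW K w₂ := by
  simp [mOfW, MonoidAlgebra.single_mul_single]

section IdealSpan

variable {A : Type*} [Ring A] [Algebra K A]

lemma mem_idealSpan (p q : A) {g : A} {s : Set A} (hg : g ∈ s) :
    p * g * q ∈ idealSpan K s :=
  Submodule.subset_span ⟨p, q, g, hg, rfl⟩

lemma idealSpan_mono {s t : Set A} (h : s ⊆ t) : idealSpan K s ≤ idealSpan K t := by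
  apply Submodule.span_mono
  rintro x ⟨p, q, a, ha, rfl⟩
  exact ⟨p, q, a, h ha, rfl⟩

lemma idealSpan_mul_right {s : Set A} {x : A} (hx : x ∈ idealSpan K s) (r : A) :
    x * r ∈ idealSpan K s := by
  induction hx using Submodule.span_induction with
  | mem y hy =>
    obtain ⟨p, q, a, ha, rfl⟩ := hy
    simpa [mul_assoc] using mem_idealSpan K p (q * r) ha
  | zero => simpa using (idealSpan K s).zero_mem
  | add y z _ _ hy hz => simpa [add_mul] using (idealSpan K s).add_mem hy hz
  | smul k y _ hy => simpa [smul_mul_assoc] using (idealSpan K s).smul_mem k hy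

lemma idealSpan_mul_left {s : Set A} {x : A} (hx : x ∈ idealSpan K s) (r : A) :
    r * x ∈ idealSpan K s := by
  induction hx using Submodule.span_induction with
  | mem y hy =>
    obtain ⟨p, q, a, ha, rfl⟩ := hy
    have := mem_idealSpan K (r * p) q ha
    simpa [mul_assoc] using this
  | zero => simpa using (idealSpan K s).zero_mem
  | add y z _ _ hy hz => simpa [mul_add] using (idealSpan K s).add_mem hy hz
  | smul k y _ hy => simpa [mul_smul_comm] using (idealSpan K s).smul_mem k hy

end IdealSpan

section RlLt

variable {X : Type*} [LinearOrder X] {m : ℕ}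

lemma rlLt_irrefl (u : Fin m → X) : ¬ rlLt u u := by
  rintro ⟨j, hj, -⟩; exact lt_irrefl _ hj

lemma rlLt_trans {u v w : Fin m → X} (h1 : rlLt u v) (h2 : rlLt v w) : rlLt u w := by
  obtain ⟨j₁, hj₁, ha₁⟩ := h1
  obtain ⟨j₂, hj₂, ha₂⟩ := h2
  rcases lt_trichotomy j₁ j₂ with h | h | h
  · exact ⟨j₂, (ha₁ j₂ h ▸ hj₂), fun l hl => (ha₁ l (h.trans hl)).trans (ha₂ l hl)⟩
  · exact ⟨j₁, hj₁.trans (h ▸ hj₂), fun l hl => (ha₁ l hl).trans (ha₂ l (h ▸ hl))⟩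
  · exact ⟨j₁, lt_of_lt_of_eq hj₁ (ha₂ j₁ h), fun l hl => (ha₁ l hl).trans (ha₂ l (h.trans hl))⟩

lemma rlLt_trichotomy (u v : Fin m → X) : rlLt u v ∨ u = v ∨ rlLt v u := by
  by_cases huv : u = v
  · exact Or.inr (Or.inl huv)
  · have hne : {j : Fin m | u j ≠ v j}.Nonempty := by
      rw [Set.nonempty_iff_ne_empty]
      intro h
      exact huv (funext fun j => not_not.mp (Set.eq_empty_iff_forall_notMem.mp h j))
    have hfin : {j : Fin m | u j ≠ v j}.Finite := Set.toFinite _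
    obtain ⟨j, hj, hmax⟩ := Set.exists_max_image _ id hfin hne
    have haij : ∀ l, j < l → u l = v l := by
      intro l hl
      by_contra hne'
      exact absurd (hmax l hne') (not_le_of_gt hl)
    rcases lt_or_gt_of_ne hj with h | h
    · exact Or.inl ⟨j, h, haij⟩
    · exact Or.inr (Or.inr ⟨j, h, fun l hl => (haij l hl).symm⟩)

lemma rlLt_wf [Finite X] : WellFounded (rlLt (X := X) (m := m)) := by
  have : IsTrans (Fin m → X) rlLt := ⟨fun _ _ _ => rlLt_trans⟩
  have : IsIrrefl (Fin m → X) rlLt := ⟨rlLt_irrefl⟩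
  exact Finite.wellFounded_of_trans_of_irrefl _

lemma rlLt_snoc {u v : Fin m → X} (h : rlLt u v) (x : X) :
    rlLt (Fin.snoc u x) (Fin.snoc v x) := by
  obtain ⟨j, hj, ha⟩ := h
  refine ⟨j.castSucc, by simpa, fun l hl => ?_⟩
  rcases Fin.eq_castSucc_or_eq_last l with ⟨l', rfl⟩ | rfl
  · simpa using ha l' (by simpa using hl)
  · simp

end RlLt

section Words

lemma ofFn_snoc {m : ℕ} (u : Fin m → X) (x : X) :
    List.ofFn (Fin.snoc u x : Fin (m+1) → X) = List.ofFn u ++ [x] := by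
  rw [List.ofFn_succ']
  simp [List.concat_eq_append]

lemma mOf_snoc {m : ℕ} (u : Fin m → X) (x : X) :
    mOf K (Fin.snoc u x : Fin (m+1) → X) = mOf K u * mOfW K (FreeMonoid.of x) := by
  rw [mOf, ofFn_snoc, FreeMonoid.ofList_append, mOfW_mul, FreeMonoid.ofList_singleton]
  rfl

lemma ofFn_splice {n : ℕ} (v : Fin n → X) (j : ℕ) (hj : j + 1 < n) :
    List.ofFn v = (List.ofFn v).take j ++
      ([v ⟨j, by omega⟩, v ⟨j+1, hj⟩] ++ (List.ofFn v).drop (j+2)) := by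
  have hlen : (List.ofFn v).length = n := List.length_ofFn
  have h1 : (List.ofFn v).drop j = v ⟨j, by omega⟩ :: (List.ofFn v).drop (j+1) := by
    rw [List.drop_eq_getElem_cons (by omega)]
    congr 1
    exact List.getElem_ofFn ..
  have h2 : (List.ofFn v).drop (j+1) = v ⟨j+1, hj⟩ :: (List.ofFn v).drop (j+2) := by
    rw [List.drop_eq_getElem_cons (by omega)]
    congr 1
    exact List.getElem_ofFn ..
  conv_lhs => rw [← List.take_append_drop j (List.ofFn v)]
  rw [h1, h2]
  simp

lemma mOf_splice {n : ℕ} (v : Fin n → X) (j : ℕ) (hj : j + 1 < n) :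
    mOf K v = mOfW K (FreeMonoid.ofList ((List.ofFn v).take j)) *
      m2 K (v ⟨j, by omega⟩) (v ⟨j+1, hj⟩) *
      mOfW K (FreeMonoid.ofList ((List.ofFn v).drop (j+2))) := by
  conv_lhs => rw [mOf, ofFn_splice v j hj]
  rw [FreeMonoid.ofList_append, FreeMonoid.ofList_append, mOfW_mul, mOfW_mul, ← mul_assoc]
  rfl

/-- The word obtained from `v` by replacing letters at positions `j`, `j+1` by `γ`, `δ`. -/
def spliced {X : Type*} {n : ℕ} (v : Fin n → X) (j : ℕ) (γ δ : X) : Fin n → X :=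
  fun l => if (l : ℕ) = j then γ else if (l : ℕ) = j + 1 then δ else v l

lemma ofFn_spliced {n : ℕ} (v : Fin n → X) (j : ℕ) (hj : j + 1 < n) (γ δ : X) :
    List.ofFn (spliced v j γ δ) = (List.ofFn v).take j ++
      ([γ, δ] ++ (List.ofFn v).drop (j+2)) := by
  have h := ofFn_splice (spliced v j γ δ) j hj
  have e1 : (List.ofFn (spliced v j γ δ)).take j = (List.ofFn v).take j := by
    apply List.ext_getElem (by simp)
    intro i h1 h2
    have hi : i < j := by simp at h1; omega
    rw [List.getElem_take, List.getElem_take, List.getElem_ofFn, List.getElem_ofFn]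
    simp only [spliced]
    rw [if_neg (by omega), if_neg (by omega)]
  have e2 : (List.ofFn (spliced v j γ δ)).drop (j+2) = (List.ofFn v).drop (j+2) := by
    apply List.ext_getElem (by simp)
    intro i h1 h2
    rw [List.getElem_drop, List.getElem_drop, List.getElem_ofFn, List.getElem_ofFn]
    simp only [spliced]
    rw [if_neg (by omega), if_neg (by omega)]
  rw [h, e1, e2]
  congr 2 <;> simp [spliced]

lemma mOf_spliced {n : ℕ} (v : Fin n → X) (j : ℕ) (hj : j + 1 < n) (γ δ : X) :
    mOf K (spliced v j γ δ) = mOfW K (FreeMonoid.ofList ((List.ofFn v).take j)) *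
      m2 K γ δ * mOfW K (FreeMonoid.ofList ((List.ofFn v).drop (j+2))) := by
  conv_lhs => rw [mOf, ofFn_spliced v j hj]
  rw [FreeMonoid.ofList_append, FreeMonoid.ofList_append, mOfW_mul, mOfW_mul, ← mul_assoc]
  rfl

end Words

section Supp

lemma mem_supp_mOfW {w w' : FreeMonoid X} (h : w' ∈ suppOf (mOfW K w)) : w' = w := by
  rw [suppOf, mOfW, MonoidAlgebra.coeff_single] at h
  have := Finsupp.support_single_subset (a := w) (b := (1 : K)) h
  simpa using this

lemma mem_supp_sub {w₁ w₂ w' : FreeMonoid X}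
    (h : w' ∈ suppOf (mOfW K w₁ - mOfW K w₂)) : w' = w₁ ∨ w' = w₂ := by
  classical
  rw [suppOf, MonoidAlgebra.coeff_sub] at h
  have h2 := Finsupp.support_sub h
  rcases Finset.mem_union.mp h2 with h3 | h3
  · exact Or.inl (mem_supp_mOfW K h3)
  · exact Or.inr (mem_supp_mOfW K h3)

lemma word_pair_eq {X : Type*} {a b c d : X}
    (h : (FreeMonoid.of a * FreeMonoid.of b : FreeMonoid X) = FreeMonoid.of c * FreeMonoid.of d) :
    a = c ∧ b = d := by
  have := congrArg FreeMonoid.toList h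
  rw [FreeMonoid.toList_mul, FreeMonoid.toList_mul, FreeMonoid.toList_of, FreeMonoid.toList_of]
    at this
  simpa using this

end Supp

section Descent

variable {X : Type*} [Fintype X] [LinearOrder X] [Nonempty X]
variable {M : Set (MonoidAlgebra K (FreeMonoid X))}

lemma le_topEl (x : X) : x ≤ topEl X := Finset.le_max' _ _ (Finset.mem_univ x)

lemma descent_rel (hM : IsQHS K M) (c : X) :
    (∃ g ∈ M, g = m2 K (topEl X) c) ∨
    (∃ g ∈ M, ∃ γ δ : X, δ < c ∧ g = m2 K (topEl X) c - m2 K γ δ) := by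
  set b := topEl X with hbdef
  have hw : (FreeMonoid.of b * FreeMonoid.of c : FreeMonoid X) ∈
      {w : FreeMonoid X | ∃ a b' : X, b' ≤ a ∧ w = FreeMonoid.of a * FreeMonoid.of b'} :=
    ⟨b, c, le_topEl c, rfl⟩
  rw [← hM.2.1] at hw
  obtain ⟨g, hgM, hwg⟩ := by simpa using hw
  rcases hM.2.2 g hgM with ⟨α, β, hβα, rfl⟩ | ⟨α, β, γ, δ, h1, h2, h3, rfl⟩ |
    ⟨α, β, δ, h1, h2, rfl⟩
  · have := mem_supp_mOfW K (w := FreeMonoid.of α * FreeMonoid.of β) hwg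
    obtain ⟨rfl, rfl⟩ := word_pair_eq this
    exact Or.inl ⟨_, hgM, rfl⟩
  · rcases mem_supp_sub K hwg with h | h
    · obtain ⟨rfl, rfl⟩ := word_pair_eq h
      exact Or.inr ⟨_, hgM, γ, δ, lt_of_le_of_lt h1 h2, rfl⟩
    · obtain ⟨rfl, rfl⟩ := word_pair_eq h
      exact absurd (h2.trans_le (h3.trans (le_topEl α))) (lt_irrefl _)
  · rcases mem_supp_sub K hwg with h | h
    · obtain ⟨rfl, rfl⟩ := word_pair_eq h
      exact Or.inr ⟨_, hgM, c, δ, h1, rfl⟩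
    · obtain ⟨rfl, rfl⟩ := word_pair_eq h
      exact absurd (h2.trans_le (le_topEl α)) (lt_irrefl _)

lemma tame_reduce {m : ℕ} (hsing : ∀ u : Fin m → X, ¬ SingularMon K M u)
    (w0 : Fin m → X) :
    mOf K w0 ∈ qhsIdeal K M ∨
    ∃ u₀ w' : Fin m → X, ∃ j : Fin m,
      mOf K w0 - mOf K w' ∈ qhsIdeal K M ∧ w' j = topEl X ∧
      (∀ l : Fin m, j < l → w' l = u₀ l) ∧ (u₀ = w0 ∨ rlLt u₀ w0) := by
  set I := qhsIdeal K M
  by_cases h0 : mOf K w0 ∈ I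
  · exact Or.inl h0
  refine Or.inr ?_
  set S : Set (Fin m → X) := {v | mOf K w0 - mOf K v ∈ I} with hS
  have hw0S : w0 ∈ S := by simp [hS, I.zero_mem]
  obtain ⟨u₀, hu₀S, hmin⟩ := (rlLt_wf (X := X) (m := m)).has_min S ⟨w0, hw0S⟩
  have hu₀ : mOf K w0 - mOf K u₀ ∈ I := hu₀S
  have hMinimal : MinimalMon K M u₀ := by
    constructor
    · intro h
      exact h0 (by simpa using I.add_mem hu₀ h)
    · intro v hv
      have hvS : v ∈ S := by
        have := I.add_mem hu₀ hv
        simpa [hS] using this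
      rcases rlLt_trichotomy u₀ v with h | h | h
      · exact Or.inr h
      · exact Or.inl h
      · exact absurd h (hmin v hvS)
  have hTame : TameMon K M u₀ := by
    by_contra h
    exact hsing u₀ ⟨hMinimal, h⟩
  obtain ⟨-, v, j, hIv, hvj, hvl⟩ := hTame
  refine ⟨u₀, v, j, ?_, hvj, hvl, ?_⟩
  · have := I.add_mem hu₀ hIv
    simpa using this
  · rcases rlLt_trichotomy u₀ w0 with h | h | h
    · exact Or.inr h
    · exact Or.inl h
    · exact absurd h (hmin w0 hw0S)

end Descent

section Main

variable (K : Type*) [Field K] {X : Type*} [Fintype X] [LinearOrder X] [Nonempty X]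
variable {M : Set (MonoidAlgebra K (FreeMonoid X))}

lemma long_word_mem (hM : IsQHS K M) {m : ℕ}
    (hsing : ∀ u : Fin m → X, ¬ SingularMon K M u) :
    ∀ u : Fin (m+1) → X, mOf K u ∈ idealSpan K M := by
  have hIJ : qhsIdeal K M ≤ idealSpan K M := idealSpan_mono K Set.diff_subset
  intro u
  refine (rlLt_wf (X := X) (m := m+1)).induction (C := fun u => mOf K u ∈ idealSpan K M) u ?_
  clear u; intro u IH
  set J := idealSpan K M with hJdef
  set w0 : Fin m → X := Fin.init u with hw0
  set c0 : X := u (Fin.last m) with hc0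
  have hu : u = Fin.snoc w0 c0 := (Fin.snoc_init_self u).symm
  rcases tame_reduce K hsing w0 with h | ⟨u₀, w', j, hw', hjb, hjl, hcmp⟩
  · rw [hu, mOf_snoc]
    exact idealSpan_mul_right K (hIJ h) _
  · set U' : Fin (m+1) → X := Fin.snoc w' c0 with hU'
    have hstep1 : mOf K u - mOf K U' ∈ J := by
      rw [hu, mOf_snoc, mOf_snoc, ← sub_mul]
      exact idealSpan_mul_right K (hIJ hw') _
    have hjm : (j : ℕ) < m := j.isLt
    have hj1 : (j : ℕ) + 1 < m + 1 := by omega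
    have hUj : U' ⟨(j : ℕ), by omega⟩ = topEl X := by
      have e : (⟨(j : ℕ), by omega⟩ : Fin (m+1)) = j.castSucc := by
        ext; simp
      rw [e, hU', Fin.snoc_castSucc, hjb]
    set V : Fin (m+1) → X := Fin.snoc u₀ c0 with hV
    have hagree : ∀ l : Fin (m+1), (j : ℕ) < (l : ℕ) → U' l = V l := by
      intro l hl
      rcases Fin.eq_castSucc_or_eq_last l with ⟨l', rfl⟩ | rfl
      · rw [hU', hV, Fin.snoc_castSucc, Fin.snoc_castSucc]
        exact hjl l' (by rw [Fin.lt_def]; simpa using hl)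
      · rw [hU', hV, Fin.snoc_last, Fin.snoc_last]
    have hsnoc_le : V = u ∨ rlLt V u := by
      rcases hcmp with he | h
      · left; rw [hV, hu, he]
      · right; rw [hV, hu]; exact rlLt_snoc h c0
    rcases descent_rel K hM (U' ⟨(j : ℕ) + 1, hj1⟩) with ⟨g, hgM, rfl⟩ |
      ⟨g, hgM, γ, δ, hδ, rfl⟩
    · -- monomial relation: b·c ∈ M, so U' itself is in J
      have hsp := mOf_splice K U' (j : ℕ) hj1
      rw [hUj] at hsp
      have hU'J : mOf K U' ∈ J := by
        rw [hsp]
        exact mem_idealSpan K _ _ hgM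
      have he : mOf K u = (mOf K u - mOf K U') + mOf K U' := by abel
      rw [he]
      exact J.add_mem hstep1 hU'J
    · -- binomial relation
      set U'' : Fin (m+1) → X := spliced U' (j : ℕ) γ δ with hU''
      have hsp1 := mOf_splice K U' (j : ℕ) hj1
      have hsp2 := mOf_spliced K U' (j : ℕ) hj1 γ δ
      have hdiff : mOf K U' - mOf K U'' ∈ J := by
        rw [hU'', hsp1, hsp2, hUj]
        have he : mOfW K (FreeMonoid.ofList ((List.ofFn U').take (j : ℕ))) *
            m2 K (topEl X) (U' ⟨(j : ℕ) + 1, hj1⟩) *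
            mOfW K (FreeMonoid.ofList ((List.ofFn U').drop ((j : ℕ)+2))) -
            mOfW K (FreeMonoid.ofList ((List.ofFn U').take (j : ℕ))) *
            m2 K γ δ *
            mOfW K (FreeMonoid.ofList ((List.ofFn U').drop ((j : ℕ)+2))) =
            mOfW K (FreeMonoid.ofList ((List.ofFn U').take (j : ℕ))) *
            (m2 K (topEl X) (U' ⟨(j : ℕ) + 1, hj1⟩) - m2 K γ δ) *
            mOfW K (FreeMonoid.ofList ((List.ofFn U').drop ((j : ℕ)+2))) := by
          noncomm_ring
        rw [he]
        exact mem_idealSpan K _ _ hgM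
      have hrl : rlLt U'' u := by
        have h1 : rlLt U'' V := by
          refine ⟨⟨(j : ℕ) + 1, hj1⟩, ?_, ?_⟩
          · have e1 : U'' ⟨(j : ℕ) + 1, hj1⟩ = δ := by
              rw [hU'']
              simp only [spliced]
              rw [if_neg (by omega)]
              simp
            have e2 : V ⟨(j : ℕ) + 1, hj1⟩ = U' ⟨(j : ℕ) + 1, hj1⟩ :=
              (hagree _ (by simp)).symm
            rw [e1, e2]
            exact hδ
          · intro l hl
            rw [Fin.lt_def] at hl
            have e1 : U'' l = U' l := by
              rw [hU'']
              simp only [spliced]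
              rw [if_neg (by simp at hl; omega), if_neg (by simp at hl; omega)]
            rw [e1]
            exact hagree l (by simp at hl; omega)
        rcases hsnoc_le with he | hlt
        · rwa [he] at h1
        · exact rlLt_trans h1 hlt
      have hU''J : mOf K U'' ∈ J := IH _ hrl
      have he : mOf K u = (mOf K u - mOf K U') + (mOf K U' - mOf K U'') + mOf K U'' := by
        abel
      rw [he]
      exact J.add_mem (J.add_mem hstep1 hdiff) hU''J

end Main

section Finale

variable (K : Type*) [Field K] {X : Type*} [Fintype X] [LinearOrder X] [Nonempty X]
variable {M : Set (MonoidAlgebra K (FreeMonoid X))}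

lemma list_word_mem (hM : IsQHS K M) {m : ℕ}
    (hsing : ∀ u : Fin m → X, ¬ SingularMon K M u)
    (l : List X) (hl : l.length = m + 1) :
    mOfW K (FreeMonoid.ofList l) ∈ idealSpan K M := by
  set u : Fin (m+1) → X := fun i => l[(i : ℕ)]'(by omega) with hudef
  have he : List.ofFn u = l := by
    apply List.ext_getElem (by simpa using hl.symm)
    intro i h1 h2
    rw [List.getElem_ofFn]
  have := long_word_mem K hM hsing u
  rwa [mOf, he] at this

lemma long_list_mem (hM : IsQHS K M) {m : ℕ}
    (hsing : ∀ u : Fin m → X, ¬ SingularMon K M u)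
    (l : List X) (hl : m + 1 ≤ l.length) :
    mOfW K (FreeMonoid.ofList l) ∈ idealSpan K M := by
  have hsplit : l = l.take (m+1) ++ l.drop (m+1) := (List.take_append_drop _ _).symm
  rw [hsplit, FreeMonoid.ofList_append, mOfW_mul]
  refine idealSpan_mul_right K ?_ _
  exact list_word_mem K hM hsing _ (by simp [hl])

end Finale

end QHSAux

/-- **Lemma (regqhs).** If `M` is a regular QHS on `X`, then the quadratic
semigroup algebra `R_M = K⟨X⟩ / J_M` is finite dimensional. -/
theorem regular_qhs_finite_dimensional
    (K : Type*) [Field K] (X : Type*) [Fintype X] [LinearOrder X] [Nonempty X]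
    (M : Set (MonoidAlgebra K (FreeMonoid X))) (hM : IsQHS K M)
    (hreg : RegularQHS K M) :
    Module.Finite K (MonoidAlgebra K (FreeMonoid X) ⧸ idealSpan K M) := by
  obtain ⟨m, -, hsing⟩ := hreg
  set J := idealSpan K M with hJ
  rw [Module.finite_def, Submodule.fg_def]
  refine ⟨J.mkQ '' ((fun l : List X => mOfW K (FreeMonoid.ofList l)) ''
    {l : List X | l.length ≤ m}), ((List.finite_length_le (α := X) (n := m)).image _).image _, ?_⟩
  rw [eq_top_iff]
  rintro x -
  obtain ⟨f, rfl⟩ := Submodule.mkQ_surjective J x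
  induction f using MonoidAlgebra.induction_on with
  | of g =>
    have hofg : (MonoidAlgebra.of K (FreeMonoid X)) g = mOfW K g := rfl
    rw [hofg]
    by_cases hlen : (FreeMonoid.toList g).length ≤ m
    · exact Submodule.subset_span
        ⟨_, ⟨FreeMonoid.toList g, hlen, by simp [FreeMonoid.ofList_toList]⟩, rfl⟩
    · have hmem : mOfW K g ∈ J := by
        have := QHSAux.long_list_mem K hM hsing (FreeMonoid.toList g) (by omega)
        rwa [FreeMonoid.ofList_toList] at this
      have h0 : J.mkQ (mOfW K g) = 0 := (Submodule.Quotient.mk_eq_zero J).mpr hmem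
      rw [h0]
      exact Submodule.zero_mem _
  | add f g hf hg =>
    rw [map_add]
    exact Submodule.add_mem _ hf hg
  | smul r f hf =>
    rw [map_smul]
    exact Submodule.smul_mem _ _ hf
end
end

section
/- Let X be a finite totally ordered set, M a QHS on X, and u = u_1…u_m a singular monomial with respect to M. Suppose 1 ≤ k ≤ m and v = v_1…v_k is a degree-k monomial with v − u_1…u_k ∈ I_M. Then there exists a degree-m monomial w = w_1…w_m such that w_m ≥ v_k and u − w ∈ I_M. -/
noncomputable section

section Helpers
variable {K : Type*} [Field K] {X : Type*}

def lOf (K : Type*) [Field K] {X : Type*} (L : List X) :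
    MonoidAlgebra K (FreeMonoid X) := mOfW K (FreeMonoid.ofList L)

lemma lOf_append (L1 L2 : List X) : lOf K (L1 ++ L2) = lOf K L1 * lOf K L2 := by
  simp [lOf, mOfW, FreeMonoid.ofList_append, MonoidAlgebra.single_mul_single]

lemma mOf_eq_lOf {m : ℕ} (u : Fin m → X) : mOf K u = lOf K (List.ofFn u) := rfl

lemma word_pair (a b : X) :
    FreeMonoid.of a * FreeMonoid.of b = FreeMonoid.ofList [a, b] := by
  rw [show [a, b] = [a] ++ [b] from rfl, FreeMonoid.ofList_append,
    FreeMonoid.ofList_singleton, FreeMonoid.ofList_singleton]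

lemma m2_eq_lOf (a b : X) : m2 K a b = lOf K [a, b] := by
  rw [m2, lOf, word_pair]

lemma mem_idealSpan_of {A : Type*} [Ring A] [Algebra K A] {s : Set A} {g : A} (hg : g ∈ s)
    (p q : A) : p * g * q ∈ idealSpan K s :=
  Submodule.subset_span ⟨p, q, g, hg, rfl⟩

lemma idealSpan_mul_right {A : Type*} [Ring A] [Algebra K A] {s : Set A} {x : A}
    (hx : x ∈ idealSpan K s) (r : A) : x * r ∈ idealSpan K s := by
  induction hx using Submodule.span_induction with
  | mem x hx => obtain ⟨p, q, a, ha, rfl⟩ := hx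
                simpa [mul_assoc] using mem_idealSpan_of ha p (q * r)
  | zero => simp [Submodule.zero_mem]
  | add x y _ _ hx hy => simpa [add_mul] using Submodule.add_mem _ hx hy
  | smul c x _ hx => simpa [smul_mul_assoc] using Submodule.smul_mem _ c hx

lemma suppOf_m2 (a b : X) : suppOf (m2 K a b) = {FreeMonoid.ofList [a, b]} := by
  unfold suppOf m2 mOfW
  rw [word_pair]
  exact Finsupp.support_single_ne_zero _ (one_ne_zero (α := K))

lemma sub_single_ne {w1 w2 : FreeMonoid X} (h : w1 ≠ w2) (w3 : FreeMonoid X) :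
    (MonoidAlgebra.single w1 (1:K) - MonoidAlgebra.single w2 1) ≠
      MonoidAlgebra.single w3 1 := by
  intro hEq
  have hEq' : (Finsupp.single w1 (1:K)) - Finsupp.single w2 1 = Finsupp.single w3 1 := congrArg MonoidAlgebra.coeff hEq
  by_cases h3 : w3 = w2
  · subst h3
    have h2 := DFunLike.congr_fun hEq' w1
    rw [Finsupp.sub_apply, Finsupp.single_eq_same, Finsupp.single_eq_of_ne' (Ne.symm h)] at h2
    simp at h2
  · have h2 := DFunLike.congr_fun hEq' w2
    rw [Finsupp.sub_apply, Finsupp.single_eq_same, Finsupp.single_eq_of_ne' h,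
      Finsupp.single_eq_of_ne' h3] at h2
    simp at h2

lemma suppOf_sub_m2 (a b c d : X) {w : FreeMonoid X} (hw : w ∈ suppOf (m2 K a b - m2 K c d)) :
    w = FreeMonoid.ofList [a, b] ∨ w = FreeMonoid.ofList [c, d] := by
  classical
  unfold suppOf at hw
  rw [MonoidAlgebra.coeff_sub] at hw
  have := Finsupp.support_sub hw
  rw [Finset.mem_union] at this
  unfold m2 mOfW at this
  rw [word_pair, word_pair] at this
  simpa [MonoidAlgebra.coeff_single, Finsupp.support_single_ne_zero _ (one_ne_zero (α := K))] using this

lemma getElem_congr' (L : List X) {i j : ℕ} (h : i = j) (hi : i < L.length) :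
    L[i] = L[j]'(h ▸ hi) := by subst h; rfl

lemma getElem_PxT_self (P T : List X) (x : X) {i : ℕ} (hi : i = P.length)
    {h : i < (P ++ x :: T).length} : (P ++ x :: T)[i] = x := by
  subst hi
  rw [List.getElem_append_right (le_refl _)]
  simp

lemma getElem_cons_pos (x : X) (T : List X) {i : ℕ} (hi : 0 < i) {h : i < (x :: T).length} :
    (x :: T)[i] = T[i - 1]'(by simp at h; omega) := by
  rw [getElem_congr' _ (show i = (i-1)+1 by omega), List.getElem_cons_succ]

lemma getElem_PxT_gt (P T : List X) (x : X) {i : ℕ} (hi : P.length < i)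
    {h : i < (P ++ x :: T).length} :
    (P ++ x :: T)[i] = T[i - P.length - 1]'(by simp at h; omega) := by
  rw [List.getElem_append_right (by omega : P.length ≤ i),
    getElem_cons_pos x T (by omega)]

lemma mOf_listFn {m : ℕ} (L : List X) (hL : L.length = m) (f : Fin m → X)
    (hf : ∀ i : Fin m, f i = L[i.1]'(by rw [hL]; exact i.2)) : mOf K f = lOf K L := by
  subst hL
  unfold mOf lOf
  congr 1
  congr 1
  exact List.ext_getElem (by simp) fun i h1 h2 => by rw [List.getElem_ofFn]; exact hf ⟨i, by simpa using h1⟩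

end Helpers

section Aux
variable {K : Type*} [Field K] {X : Type*} [Fintype X] [LinearOrder X] [Nonempty X]
  {M : Set (MonoidAlgebra K (FreeMonoid X))}

lemma qhs_mem {g : MonoidAlgebra K (FreeMonoid X)} (hg : g ∈ M)
    (hne : g ≠ m2 K (topEl X) (botEl X)) (p q : MonoidAlgebra K (FreeMonoid X)) :
    p * g * q ∈ qhsIdeal K M := by
  have hg' : g ∈ M \ {m2 K (topEl X) (botEl X)} :=
    (Set.mem_diff g).mpr ⟨hg, by simpa using hne⟩
  exact mem_idealSpan_of hg' p q

lemma qhs_mul_right {x : MonoidAlgebra K (FreeMonoid X)} (hx : x ∈ qhsIdeal K M)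
    (r : MonoidAlgebra K (FreeMonoid X)) : x * r ∈ qhsIdeal K M :=
  idealSpan_mul_right hx r

set_option maxHeartbeats 2000000 in
lemma auxL (hM : IsQHS K M) {m : ℕ} (hm : 0 < m) (u : Fin m → X)
    (hu : SingularMon K M u) :
    ∀ (T P : List X) (x : X),
      P.length + 1 + T.length = m →
      (List.ofFn u).drop (P.length + 1) = T →
      mOf K u - lOf K (P ++ x :: T) ∈ qhsIdeal K M →
      ∃ w : Fin m → X, x ≤ w ⟨m - 1, by omega⟩ ∧ mOf K u - mOf K w ∈ qhsIdeal K M := by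
  intro T
  induction T with
  | nil =>
    intro P x hlen hsuf hcong
    simp only [List.length_nil] at hlen
    have hLlen : (P ++ [x]).length = m := by simp; omega
    refine ⟨fun i => (P ++ [x])[i.1]'(by rw [hLlen]; exact i.2), ?_, ?_⟩
    · show x ≤ (P ++ [x])[m - 1]'(by rw [hLlen]; omega)
      rw [getElem_PxT_self P [] x (by omega)]
    · rw [mOf_listFn (P ++ [x]) hLlen _ (fun i => rfl)]
      exact hcong
  | cons y T' ih =>
    intro P x hlen hsuf hcong
    simp only [List.length_cons] at hlen
    have hu_get : ∀ (j : ℕ) (hj : j < (y :: T').length),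
        u ⟨P.length + 1 + j, by simp at hj; omega⟩ = (y :: T')[j] := by
      intro j hj
      have h1 : j < ((List.ofFn u).drop (P.length + 1)).length := by rw [hsuf]; exact hj
      have h2 := (List.getElem_drop (xs := List.ofFn u) (i := P.length + 1) (j := j) (h := h1)).symm
      rw [List.getElem_ofFn] at h2
      rw [h2]
      exact List.getElem_of_eq hsuf h1
    by_cases hxy : x ≤ y
    · -- extend: pair increasing
      have hdrop2 : (List.ofFn u).drop (P.length + 1 + 1) = T' := by
        rw [← List.drop_drop (i := 1) (j := P.length + 1) (l := List.ofFn u), hsuf]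
        simp
      obtain ⟨w, hw1, hw2⟩ := ih (P ++ [x]) y (by simp; omega)
        (by simpa using hdrop2)
        (by
          have : (P ++ [x]) ++ y :: T' = P ++ x :: y :: T' := by simp
          rw [this]; exact hcong)
      exact ⟨w, le_trans hxy hw1, hw2⟩
    · have hyx : y < x := not_le.mp hxy
      have hwmem : FreeMonoid.ofList [x, y] ∈ ⋃ g ∈ M, (suppOf g : Set (FreeMonoid X)) := by
        rw [hM.2.1]
        simp only [Set.mem_setOf_eq]
        exact ⟨x, y, hyx.le, (word_pair x y).symm⟩
      simp only [Set.mem_iUnion, Finset.mem_coe, exists_prop] at hwmem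
      obtain ⟨g, hgM, hgsupp⟩ := hwmem
      rcases hM.2.2 g hgM with ⟨p, q, hpq, rfl⟩ | hbin
      · -- monomial relation
        rw [suppOf_m2] at hgsupp
        have hxyeq : ([x, y] : List X) = [p, q] := by
          apply FreeMonoid.ofList.injective
          simpa using hgsupp
        simp only [List.cons.injEq, and_true] at hxyeq
        obtain ⟨rfl, rfl⟩ := hxyeq
        by_cases htop : m2 K x y = m2 K (topEl X) (botEl X)
        · -- g = ba : tame, contradiction
          exfalso
          apply hu.2
          have hxtop : x = topEl X := by
            have h5 : (Finsupp.single (FreeMonoid.of x * FreeMonoid.of y) (1:K)) =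
                Finsupp.single (FreeMonoid.of (topEl X) * FreeMonoid.of (botEl X)) 1 := congrArg MonoidAlgebra.coeff htop
            have hw := Finsupp.single_left_injective (one_ne_zero (α := K)) h5
            rw [word_pair, word_pair] at hw
            have h6 := FreeMonoid.ofList.injective hw
            exact ((List.cons.injEq _ _ _ _).mp h6).1
          refine ⟨hu.1, fun i => (P ++ x :: y :: T')[i.1]'(by have := i.2; simp; omega), ⟨P.length, by omega⟩, ?_, ?_, ?_⟩
          · rw [mOf_listFn (P ++ x :: y :: T') (by simp only [List.length_append, List.length_cons]; omega) _ (fun i => rfl)]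
            exact hcong
          · show (P ++ x :: y :: T')[P.length]'(by simp only [List.length_append, List.length_cons]; omega) = topEl X
            rw [getElem_PxT_self P (y :: T') x rfl]
            exact hxtop
          · intro l hl
            have hl1 : P.length < l.1 := hl
            show (P ++ x :: y :: T')[l.1]'(by have := l.2; simp only [List.length_append, List.length_cons]; omega) = u l
            rw [getElem_PxT_gt P (y :: T') x hl1]
            have h3 : (⟨P.length + 1 + (l.1 - P.length - 1), by omega⟩ : Fin m) = l :=
              Fin.ext (by simp; omega)
            have h4 := hu_get (l.1 - P.length - 1) (by simp; omega)
            have h5 := congrArg u h3.symm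
            exact (h5.trans h4).symm
        · -- g = monomial in M': u ∈ I_M, contradiction
          exfalso
          apply hu.1.1
          have hgI : lOf K (P ++ x :: y :: T') ∈ qhsIdeal K M := by
            have he : P ++ x :: y :: T' = P ++ [x, y] ++ T' := by simp
            rw [he, lOf_append, lOf_append, ← m2_eq_lOf]
            exact qhs_mem hgM htop _ _
          have := Submodule.add_mem _ hcong hgI
          simpa using this
      · -- binomial relation
        obtain ⟨p, q, c, d, hcq, hdq, hwne, rfl⟩ :
            ∃ p q c d : X, c ≤ q ∧ d < q ∧
              (FreeMonoid.ofList [p, q] ≠ FreeMonoid.ofList [c, d]) ∧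
              g = m2 K p q - m2 K c d := by
          rcases hbin with ⟨a, b, c, d, h1, h2, h3, rfl⟩ | ⟨a, b, d, h1, h2, rfl⟩
          · refine ⟨a, b, c, d, h2.le, lt_of_le_of_lt h1 h2, ?_, rfl⟩
            intro hEq
            have := FreeMonoid.ofList.injective hEq
            simp only [List.cons.injEq, and_true] at this
            exact absurd this.2 (ne_of_gt (lt_of_le_of_lt h1 h2))
          · refine ⟨a, b, b, d, le_refl _, h1, ?_, rfl⟩
            intro hEq
            have := FreeMonoid.ofList.injective hEq
            simp only [List.cons.injEq, and_true] at this
            exact absurd this.1 (ne_of_gt h2)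
        have hgne : m2 K p q - m2 K c d ≠ m2 K (topEl X) (botEl X) := by
          rw [m2, m2, m2, mOfW, mOfW, mOfW, word_pair, word_pair]
          exact sub_single_ne hwne _
        rcases suppOf_sub_m2 p q c d hgsupp with hcase | hcase
        · -- [x,y] = [p,q] : rewrite down, contradicts minimality
          exfalso
          have hxyeq := FreeMonoid.ofList.injective hcase
          simp only [List.cons.injEq, and_true] at hxyeq
          obtain ⟨rfl, rfl⟩ := hxyeq
          have hL'len : (P ++ c :: d :: T').length = m := by
            simp only [List.length_append, List.length_cons]; omega
          set W : Fin m → X := fun i => (P ++ c :: d :: T')[i.1]'(by rw [hL'len]; exact i.2) with hW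
          have hWl : mOf K W = lOf K (P ++ c :: d :: T') :=
            mOf_listFn _ hL'len _ (fun i => rfl)
          have hkey : mOf K u - mOf K W =
              (mOf K u - lOf K (P ++ x :: y :: T')) +
                lOf K P * (m2 K x y - m2 K c d) * lOf K T' := by
            rw [hWl]
            have e1 : P ++ c :: d :: T' = P ++ [c, d] ++ T' := by simp
            have e2 : P ++ x :: y :: T' = P ++ [x, y] ++ T' := by simp
            rw [e1, e2, lOf_append, lOf_append, lOf_append, lOf_append,
              ← m2_eq_lOf, ← m2_eq_lOf]
            noncomm_ring
          have hWcong : mOf K u - mOf K W ∈ qhsIdeal K M := by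
            rw [hkey]
            exact Submodule.add_mem _ hcong (qhs_mem hgM hgne _ _)
          have hn1 : P.length + 1 < m := by omega
          have hud : u ⟨P.length + 1, hn1⟩ = y := by
            have h4 := hu_get 0 (by simp)
            simpa using h4
          have hWd : W ⟨P.length + 1, hn1⟩ = d := by
            show (P ++ c :: d :: T')[P.length + 1]'(by rw [hL'len]; exact hn1) = d
            rw [getElem_PxT_gt P (d :: T') c (by omega),
              getElem_congr' _ (show P.length + 1 - P.length - 1 = 0 by omega)]
            simp
          have hagree : ∀ l : Fin m, P.length + 1 < l.1 → u l = W l := by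
            intro l hl
            have h3 : (⟨P.length + 1 + (l.1 - P.length - 1), by omega⟩ : Fin m) = l :=
              Fin.ext (by simp; omega)
            have h4 := hu_get (l.1 - P.length - 1) (by simp; omega)
            have h5 := (congrArg u h3.symm).trans h4
            have h6 : W l = (d :: T')[l.1 - P.length - 1]'(by simp; omega) := by
              show (P ++ c :: d :: T')[l.1]'(by rw [hL'len]; exact l.2) = _
              rw [getElem_PxT_gt P (d :: T') c (by omega)]
            rw [h5, h6, getElem_cons_pos y T' (by omega), getElem_cons_pos d T' (by omega)]
          have hyd : y ≠ d := ne_of_gt hdq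
          rcases hu.1.2 W hWcong with hEq | hLt
          · have h7 := congrFun hEq ⟨P.length + 1, hn1⟩
            exact hyd (hud.symm.trans (h7.trans hWd))
          · obtain ⟨j, hjlt, hjaft⟩ := hLt
            rcases lt_trichotomy j.1 (P.length + 1) with hj | hj | hj
            · have h7 := hjaft ⟨P.length + 1, hn1⟩ hj
              exact hyd (hud.symm.trans (h7.trans hWd))
            · have hj' : j = ⟨P.length + 1, hn1⟩ := Fin.ext hj
              rw [hj', hud, hWd] at hjlt
              exact lt_asymm hdq hjlt
            · rw [hagree j hj] at hjlt
              exact lt_irrefl _ hjlt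
        · -- [x,y] = [c,d] : rewrite up, recurse
          have hxyeq := FreeMonoid.ofList.injective hcase
          simp only [List.cons.injEq, and_true] at hxyeq
          obtain ⟨rfl, rfl⟩ := hxyeq
          have hdrop2 : (List.ofFn u).drop (P.length + 1 + 1) = T' := by
            rw [← List.drop_drop (i := 1) (j := P.length + 1) (l := List.ofFn u), hsuf]
            simp
          have hkey : mOf K u - lOf K ((P ++ [p]) ++ q :: T') =
              (mOf K u - lOf K (P ++ x :: y :: T')) -
                lOf K P * (m2 K p q - m2 K x y) * lOf K T' := by
            have e1 : (P ++ [p]) ++ q :: T' = P ++ [p, q] ++ T' := by simp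
            have e2 : P ++ x :: y :: T' = P ++ [x, y] ++ T' := by simp
            rw [e1, e2, lOf_append, lOf_append, lOf_append, lOf_append,
              ← m2_eq_lOf, ← m2_eq_lOf]
            noncomm_ring
          obtain ⟨w, hw1, hw2⟩ := ih (P ++ [p]) q
            (by simp only [List.length_append, List.length_cons, List.length_nil]; omega)
            (by simpa using hdrop2)
            (by rw [hkey]; exact Submodule.sub_mem _ hcong (qhs_mem hgM hgne _ _))
          exact ⟨w, le_trans hcq hw1, hw2⟩

end Aux

/-- **Lemma (sing).** If `u = u_1 … u_m` is singular, `1 ≤ k ≤ m` and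
`v = v_1 … v_k` satisfies `v = u_1 … u_k (mod I_M)`, then there is a degree-`m`
monomial `w` with `w_m ≥ v_k` and `u = w (mod I_M)`. -/
theorem singular_last_letter_replacement
    (K : Type*) [Field K] (X : Type*) [Fintype X] [LinearOrder X] [Nonempty X]
    (M : Set (MonoidAlgebra K (FreeMonoid X))) (hM : IsQHS K M)
    (m k : ℕ) (hk1 : 1 ≤ k) (hk : k ≤ m) (u : Fin m → X)
    (hu : SingularMon K M u) (v : Fin k → X)
    (hv : mOf K v - mOf K (fun i : Fin k => u (Fin.castLE hk i)) ∈ qhsIdeal K M) :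
    ∃ w : Fin m → X,
      v ⟨k - 1, by omega⟩ ≤ w ⟨m - 1, by omega⟩ ∧
      mOf K u - mOf K w ∈ qhsIdeal K M := by
  have hm : 0 < m := lt_of_lt_of_le hk1 hk
  have hPlen : ((List.ofFn v).take (k - 1)).length = k - 1 := by
    simp only [List.length_take, List.length_ofFn]; omega
  have hlen : ((List.ofFn v).take (k - 1)).length + 1 + ((List.ofFn u).drop k).length = m := by
    simp; omega
  have hsuf : (List.ofFn u).drop (((List.ofFn v).take (k - 1)).length + 1) =
      (List.ofFn u).drop k := by
    rw [hPlen]; congr 1; omega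
  have hdropv : (List.ofFn v).drop (k - 1) = [v ⟨k - 1, by omega⟩] := by
    apply List.ext_getElem (by simp; omega)
    intro i h1 h2
    simp only [List.length_cons, List.length_nil] at h2
    have hi0 : i = 0 := by omega
    subst hi0
    rw [List.getElem_drop, List.getElem_ofFn]
    rfl
  have hvlist : (List.ofFn v).take (k - 1) ++ v ⟨k - 1, by omega⟩ :: (List.ofFn u).drop k =
      List.ofFn v ++ (List.ofFn u).drop k := by
    rw [show (v ⟨k - 1, by omega⟩ :: (List.ofFn u).drop k) =
        [v ⟨k - 1, by omega⟩] ++ (List.ofFn u).drop k from rfl,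
      ← List.append_assoc, ← hdropv, List.take_append_drop]
  have htake : List.ofFn (fun i : Fin k => u (Fin.castLE hk i)) = (List.ofFn u).take k := by
    apply List.ext_getElem (by simp; omega)
    intro i h1 h2
    rw [List.getElem_ofFn, List.getElem_take, List.getElem_ofFn]
    rfl
  have hcong : mOf K u - lOf K ((List.ofFn v).take (k - 1) ++
      v ⟨k - 1, by omega⟩ :: (List.ofFn u).drop k) ∈ qhsIdeal K M := by
    rw [hvlist]
    have hstep := qhs_mul_right hv (lOf K ((List.ofFn u).drop k))
    have hexp : (mOf K v - mOf K fun i : Fin k => u (Fin.castLE hk i)) *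
        lOf K ((List.ofFn u).drop k)
        = lOf K (List.ofFn v ++ (List.ofFn u).drop k) - mOf K u := by
      rw [sub_mul, mOf_eq_lOf, mOf_eq_lOf, ← lOf_append, ← lOf_append, htake,
        List.take_append_drop]
      rfl
    rw [hexp] at hstep
    simpa [neg_sub] using Submodule.neg_mem _ hstep
  obtain ⟨w, hw1, hw2⟩ := auxL hM hm u hu ((List.ofFn u).drop k)
    ((List.ofFn v).take (k - 1)) (v ⟨k - 1, by omega⟩) hlen hsuf hcong
  exact ⟨w, hw1, hw2⟩
end
end
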